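/- Let D = {x ∈ ℝ² : ‖x‖ ≤ 1} be the closed unit disc and S¹ = ∂D. Define φ : D → K(ℝ²) by φ(x) = S¹ \ {y ∈ ℝ² : ‖y − x/‖x‖‖ < ‖x‖} for x ≠ 0 and φ(0) = S¹. Then φ admits no single-valued continuous selection f with f(x) ∈ φ(x) for all x ∈ D. -/

import Mathlib

open Metric Classical

/-- The multivalued map on the closed unit disc `D ⊆ ℝ²`:
`φ(x) = S¹ \ {y : ‖y - x/‖x‖‖ < ‖x‖}` for `x ≠ 0` and `φ(0) = S¹`. -/
noncomputable def phiDisc (x : EuclideanSpace ℝ (Fin 2)) : Set (EuclideanSpace ℝ (Fin 2)) :=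
  if x = 0 then sphere (0 : EuclideanSpace ℝ (Fin 2)) 1
  else sphere (0 : EuclideanSpace ℝ (Fin 2)) 1 \ {y | ‖y - ‖x‖⁻¹ • x‖ < ‖x‖}

namespace NoSel
open Set

noncomputable section

/-- The unit square. -/
def Q : Set (ℝ × ℝ) := Icc (0:ℝ) 1 ×ˢ Icc (0:ℝ) 1

lemma zero_mem_Q : (0 : ℝ × ℝ) ∈ Q := by
  constructor <;> simp [Q]

lemma smul_mem_Q {c : ℝ} (hc0 : 0 ≤ c) (hc1 : c ≤ 1) {p : ℝ × ℝ} (hp : p ∈ Q) : c • p ∈ Q := by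
  obtain ⟨⟨h1, h2⟩, h3, h4⟩ := hp
  exact ⟨⟨mul_nonneg hc0 h1, mul_le_one₀ hc1 h1 h2⟩, ⟨mul_nonneg hc0 h3, mul_le_one₀ hc1 h3 h4⟩⟩

lemma re_pos_of_dist_lt {r : ℂ} (h : ‖r - 1‖ < 1) : 0 < r.re := by
  have h2 : (1 - r).re ≤ ‖1 - r‖ := Complex.re_le_norm _
  have h3 : ‖1 - r‖ = ‖r - 1‖ := by
    rw [show (1 - r) = -(r-1) by ring, norm_neg]
  simp [Complex.sub_re] at h2
  nlinarith [h2, h3 ▸ h]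

lemma aux_div (a b A B : ℂ) (ha : a ≠ 0) (hA : A ≠ 0) (hB : B ≠ 0) :
    a / A * (b / a / (B / A)) = b / B := by
  field_simp

lemma exp_arg_mul_I {z : ℂ} (hz : z ≠ 0) : Complex.exp (↑z.arg * Complex.I) = z / ‖z‖ := by
  have h := Complex.norm_mul_exp_arg_mul_I z
  have habs : ((‖z‖ : ℝ) : ℂ) ≠ 0 := by
    simpa using hz
  rw [eq_div_iff habs]
  linear_combination h

/-- Continuous argument lift on the unit square for a nonvanishing continuous map. -/
lemma exists_circle_lift (H : ℝ × ℝ → ℂ) (hH : ContinuousOn H Q) (h0 : ∀ p ∈ Q, H p ≠ 0) :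
    ∃ θ : ℝ × ℝ → ℝ, ContinuousOn θ Q ∧
      ∀ p ∈ Q, Complex.exp (↑(θ p) * Complex.I) = H p / ‖H p‖ := by
  have hQc : IsCompact Q := isCompact_Icc.prod isCompact_Icc
  -- minimum of ‖H‖ on Q
  obtain ⟨p₀, hp₀Q, hp₀⟩ := hQc.exists_isMinOn ⟨0, zero_mem_Q⟩ hH.norm
  set m : ℝ := ‖H p₀‖ with hm
  have hm0 : 0 < m := norm_pos_iff.mpr (h0 _ hp₀Q)
  have hmle : ∀ p ∈ Q, m ≤ ‖H p‖ := fun p hp => hp₀ hp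
  -- uniform continuity
  have huc := hQc.uniformContinuousOn_of_continuous hH
  rw [Metric.uniformContinuousOn_iff] at huc
  obtain ⟨δ, hδ0, hδ⟩ := huc m hm0
  obtain ⟨n, hn⟩ := exists_nat_gt (1/δ)
  have hn0 : 0 < (n:ℝ) := lt_trans (by positivity) hn
  have hnN : 0 < n := by exact_mod_cast hn0
  -- the chain points
  set c : ℕ → ℝ × ℝ → ℝ × ℝ := fun j p => ((j:ℝ)/n) • p with hc
  have hcmem : ∀ j ≤ n, ∀ p ∈ Q, c j p ∈ Q := by
    intro j hj p hp
    exact smul_mem_Q (by positivity) (by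
      rw [div_le_one hn0]; exact_mod_cast hj) hp
  have hcdist : ∀ j, ∀ p ∈ Q, dist (c (j+1) p) (c j p) < δ := by
    intro j p hp
    obtain ⟨⟨h1, h2⟩, h3, h4⟩ := hp
    have key : ∀ x : ℝ, 0 ≤ x → x ≤ 1 → dist (((j:ℝ)+1)/n * x) ((j:ℝ)/n * x) < δ := by
      intro x hx0 hx1
      rw [Real.dist_eq]
      have hx : ((j:ℝ)+1)/n * x - (j:ℝ)/n * x = x / n := by field_simp; ring
      rw [hx, _root_.abs_of_nonneg (by positivity)]
      calc x / n ≤ 1 / n := by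
            exact div_le_div_of_nonneg_right hx1 hn0.le
          _ < δ := by
            rw [div_lt_iff₀ hn0]
            calc (1:ℝ) = δ * (1/δ) := by field_simp
              _ < δ * n := by exact mul_lt_mul_of_pos_left hn hδ0
    rw [Prod.dist_eq]
    simp only [hc, Prod.smul_fst, Prod.smul_snd, smul_eq_mul, Nat.cast_add, Nat.cast_one]
    exact max_lt (key _ h1 h2) (key _ h3 h4)
  -- the ratios
  set r : ℕ → ℝ × ℝ → ℂ := fun j p => H (c (j+1) p) / H (c j p) with hr
  have hrpos : ∀ j < n, ∀ p ∈ Q, 0 < (r j p).re := by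
    intro j hj p hp
    have hcj := hcmem j (le_of_lt hj) p hp
    have hcj1 := hcmem (j+1) hj p hp
    have hne := h0 _ hcj
    apply re_pos_of_dist_lt
    have hsub : r j p - 1 = (H (c (j+1) p) - H (c j p)) / H (c j p) := by
      exact div_sub_one hne
    rw [hsub, norm_div, div_lt_one (norm_pos_iff.mpr hne)]
    calc ‖H (c (j+1) p) - H (c j p)‖ = dist (H (c (j+1) p)) (H (c j p)) := (dist_eq_norm _ _).symm
      _ < m := hδ _ hcj1 _ hcj (hcdist j p hp)
      _ ≤ ‖H (c j p)‖ := hmle _ hcj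
  -- the lift
  refine ⟨fun p => (H 0).arg + ∑ j ∈ Finset.range n, (r j p).arg, ?_, ?_⟩
  · apply ContinuousOn.add continuousOn_const
    apply continuousOn_finset_sum
    intro j hj
    rw [Finset.mem_range] at hj
    intro p hp
    have hrc : ContinuousWithinAt (r j) Q p := by
      apply ContinuousWithinAt.div
      · exact (hH _ (hcmem (j+1) hj p hp)).comp
          ((continuous_const_smul _).continuousWithinAt) (fun q hq => hcmem (j+1) hj q hq)
      · exact (hH _ (hcmem j (le_of_lt hj) p hp)).comp
          ((continuous_const_smul _).continuousWithinAt) (fun q hq => hcmem j (le_of_lt hj) q hq)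
      · exact h0 _ (hcmem j (le_of_lt hj) p hp)
    exact (Complex.continuousAt_arg (Complex.mem_slitPlane_iff.mpr
      (Or.inl (hrpos j hj p hp)))).comp_continuousWithinAt hrc
  · intro p hp
    -- telescoping by induction
    have key : ∀ k ≤ n, Complex.exp (↑((H 0).arg + ∑ j ∈ Finset.range k, (r j p).arg) * Complex.I)
        = H (c k p) / ‖H (c k p)‖ := by
      intro k hk
      induction k with
      | zero =>
        have hc0 : c 0 p = 0 := by simp [hc]
        simp only [Finset.range_zero, Finset.sum_empty, add_zero, hc0]
        exact exp_arg_mul_I (h0 _ zero_mem_Q)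
      | succ k ih =>
        have hk' : k ≤ n := le_of_lt hk
        have ihh := ih hk'
        have hsum : ((H 0).arg + ∑ j ∈ Finset.range (k+1), (r j p).arg : ℝ)
            = ((H 0).arg + ∑ j ∈ Finset.range k, (r j p).arg) + (r k p).arg := by
          rw [Finset.sum_range_succ]; ring
        rw [hsum]
        have hrk := exp_arg_mul_I (z := r k p) (by
          have := hrpos k hk p hp
          intro h; rw [h] at this; simp at this)
        rw [Complex.ofReal_add, add_mul, Complex.exp_add, ihh, hrk]
        have hk1 : H (c (k+1) p) ≠ 0 := h0 _ (hcmem (k+1) hk p hp)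
        have hk0 : H (c k p) ≠ 0 := h0 _ (hcmem k hk' p hp)
        have hnk1 : (‖H (c (k+1) p)‖ : ℂ) ≠ 0 := by
          simpa using norm_ne_zero_iff.mpr hk1
        have hnk0 : (‖H (c k p)‖ : ℂ) ≠ 0 := by
          simpa using norm_ne_zero_iff.mpr hk0
        have hnorm : ‖r k p‖ = ‖H (c (k+1) p)‖ / ‖H (c k p)‖ := norm_div _ _
        rw [hnorm, show (r k p) = H (c (k+1) p) / H (c k p) from rfl, Complex.ofReal_div]
        exact aux_div _ _ _ _ hk0 hnk0 hnk1
    have hcn : c n p = p := by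
      simp [hc, div_self (ne_of_gt hn0)]
    have := key n le_rfl
    rwa [hcn] at this

lemma d_eq_zero {d : ℝ → ℝ} (hd : ContinuousOn d (Icc 0 1))
    (hmem : ∀ s ∈ Icc (0:ℝ) 1, ∃ k : ℤ, d s = 2 * Real.pi * k)
    (h0 : d 0 = 0) : d 1 = 0 := by
  by_contra hne
  have h11 : (1:ℝ) ∈ Icc (0:ℝ) 1 := by norm_num
  obtain ⟨k, hk⟩ := hmem 1 h11
  have hpi := Real.pi_pos
  have hk0 : k ≠ 0 := by
    intro h; rw [h] at hk; simp at hk; exact hne hk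
  have parity : ∀ s ∈ Icc (0:ℝ) 1, d s ≠ Real.pi ∧ d s ≠ -Real.pi := by
    intro s hs
    obtain ⟨m, hm⟩ := hmem s hs
    constructor
    · intro h
      rw [h] at hm
      have h1 : (2*(m:ℝ) - 1) * Real.pi = 0 := by linarith
      rcases mul_eq_zero.mp h1 with h' | h'
      · have h2 : (2*m : ℝ) = 1 := by linarith
        have h3 : (2*m : ℤ) = 1 := by exact_mod_cast h2
        omega
      · linarith
    · intro h
      rw [h] at hm
      have h1 : (2*(m:ℝ) + 1) * Real.pi = 0 := by linarith
      rcases mul_eq_zero.mp h1 with h' | h'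
      · have h2 : (2*m : ℝ) = -1 := by linarith
        have h3 : (2*m : ℤ) = -1 := by exact_mod_cast h2
        omega
      · linarith
  rcases lt_or_gt_of_ne hk0 with hneg | hpos
  · have hd1 : d 1 ≤ -(2*Real.pi) := by
      rw [hk]
      have hle : (k:ℝ) ≤ -1 := by exact_mod_cast (by omega : k ≤ -1)
      nlinarith
    have hsub := intermediate_value_Icc' (zero_le_one) hd
    have hmem' : -Real.pi ∈ Icc (d 1) (d 0) := ⟨by linarith, by linarith⟩
    obtain ⟨s, hs, hds⟩ := hsub hmem'
    exact (parity s hs).2 hds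
  · have hd1 : 2*Real.pi ≤ d 1 := by
      rw [hk]
      have hle : (1:ℝ) ≤ (k:ℝ) := by exact_mod_cast hpos
      nlinarith
    have hsub := intermediate_value_Icc (zero_le_one) hd
    have hmem' : Real.pi ∈ Icc (d 0) (d 1) := ⟨by linarith, by linarith⟩
    obtain ⟨s, hs, hds⟩ := hsub hmem'
    exact (parity s hs).1 hds

/-- Two continuous "angle" functions on `[0,1]` whose exponentials agree and which agree at `0`
agree at `1`. -/
lemma lift_eq {a b : ℝ → ℝ} (ha : ContinuousOn a (Icc 0 1)) (hb : ContinuousOn b (Icc 0 1))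
    (hab : ∀ s ∈ Icc (0:ℝ) 1, Complex.exp (↑(a s) * Complex.I) = Complex.exp (↑(b s) * Complex.I))
    (h0 : a 0 = b 0) : a 1 = b 1 := by
  have key : a 1 - b 1 = 0 := by
    apply d_eq_zero (hd := ha.sub hb)
    · intro s hs
      have h := hab s hs
      have hre : Complex.exp (↑(a s - b s) * Complex.I) = 1 := by
        rw [show ((↑(a s - b s) : ℂ) * Complex.I) = ↑(a s) * Complex.I - ↑(b s) * Complex.I by
          push_cast; ring, Complex.exp_sub, h, div_self (Complex.exp_ne_zero _)]
      obtain ⟨k, hk⟩ := Complex.exp_eq_one_iff.mp hre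
      refine ⟨k, ?_⟩
      have hk' : (↑(a s - b s) : ℂ) * Complex.I = ↑(2 * Real.pi * (k:ℝ)) * Complex.I := by
        rw [hk]; push_cast; ring
      have := mul_right_cancel₀ Complex.I_ne_zero hk'
      exact_mod_cast this
    · simp [h0]
  linarith

/-- The standard parametrization of the unit circle in `ℝ²`. -/
def ee (s : ℝ) : EuclideanSpace ℝ (Fin 2) := !₂[Real.cos (2*Real.pi*s), Real.sin (2*Real.pi*s)]

/-- Identification of `ℝ²` with `ℂ`. -/
def iota (v : EuclideanSpace ℝ (Fin 2)) : ℂ := ↑(v 0) + ↑(v 1) * Complex.I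

lemma ee_cont : Continuous ee := by
  apply (PiLp.continuous_toLp 2 _).comp
  apply continuous_pi; intro i; fin_cases i <;> simp <;> fun_prop

lemma iota_cont : Continuous iota := by
  unfold iota
  exact (Complex.continuous_ofReal.comp
      ((EuclideanSpace.proj (0 : Fin 2) : EuclideanSpace ℝ (Fin 2) →L[ℝ] ℝ).continuous)).add
    ((Complex.continuous_ofReal.comp
      ((EuclideanSpace.proj (1 : Fin 2) : EuclideanSpace ℝ (Fin 2) →L[ℝ] ℝ).continuous)).mul
        continuous_const)

lemma ee_norm (s : ℝ) : ‖ee s‖ = 1 := by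
  rw [EuclideanSpace.norm_eq]
  simp [ee, Fin.sum_univ_two, Real.norm_eq_abs, sq_abs]

lemma ee_per : ee 1 = ee 0 := by
  unfold ee
  norm_num

lemma iota_eq_zero {v : EuclideanSpace ℝ (Fin 2)} (h : iota v = 0) : v = 0 := by
  unfold iota at h
  rw [Complex.ext_iff] at h
  simp at h
  ext i
  fin_cases i
  · simpa using h.1
  · simpa using h.2

lemma iota_neg (v : EuclideanSpace ℝ (Fin 2)) : iota (-v) = -iota v := by
  unfold iota
  simp [PiLp.neg_apply]
  ring

lemma iota_ee (s : ℝ) : iota (ee s) = Complex.exp (↑(2*Real.pi*s) * Complex.I) := by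
  rw [Complex.exp_mul_I, ← Complex.ofReal_cos, ← Complex.ofReal_sin]
  unfold iota ee
  simp

end

end NoSel

open NoSel Set in
/-- `φ` admits no single-valued continuous selection on the closed unit disc. -/
theorem no_continuous_selection :
    ¬ ∃ f : EuclideanSpace ℝ (Fin 2) → EuclideanSpace ℝ (Fin 2),
      ContinuousOn f (closedBall (0 : EuclideanSpace ℝ (Fin 2)) 1) ∧
      ∀ x ∈ closedBall (0 : EuclideanSpace ℝ (Fin 2)) 1, f x ∈ phiDisc x := by
  rintro ⟨f, hf, hsel⟩
  set D := closedBall (0 : EuclideanSpace ℝ (Fin 2)) 1 with hD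
  -- every selected value lies on the unit sphere
  have hfs : ∀ x ∈ D, ‖f x‖ = 1 := by
    intro x hx
    have h := hsel x hx
    unfold phiDisc at h
    by_cases h0 : x = 0
    · rw [if_pos h0] at h; exact mem_sphere_zero_iff_norm.mp h
    · rw [if_neg h0] at h; exact mem_sphere_zero_iff_norm.mp h.1
  -- `f` has no fixed point on the disc
  have hfix : ∀ x ∈ D, f x ≠ x := by
    intro x hx heq
    have h := hsel x hx
    unfold phiDisc at h
    have hx0 : x ≠ 0 := by
      intro h0
      have := hfs x hx
      rw [heq, h0] at this
      simp at this
    rw [if_neg hx0] at h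
    have hx1 : ‖x‖ = 1 := by rw [← heq]; exact hfs x hx
    apply h.2
    show ‖f x - ‖x‖⁻¹ • x‖ < ‖x‖
    rw [heq, hx1]
    norm_num
  -- membership facts
  have h0I : (0:ℝ) ∈ Icc (0:ℝ) 1 := by norm_num
  have h1I : (1:ℝ) ∈ Icc (0:ℝ) 1 := by norm_num
  have heball : ∀ s : ℝ, ee s ∈ D := fun s => by
    rw [hD, mem_closedBall_zero_iff, ee_norm]
  have hball : ∀ p ∈ Q, p.2 • ee p.1 ∈ D := by
    intro p hp
    rw [hD, mem_closedBall_zero_iff, norm_smul, ee_norm, mul_one, Real.norm_eq_abs,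
      _root_.abs_of_nonneg hp.2.1]
    exact hp.2.2
  -- the two homotopies
  set H₁ : ℝ × ℝ → ℂ := fun p => iota (f (p.2 • ee p.1) - p.2 • ee p.1) with hH₁
  set H₂ : ℝ × ℝ → ℂ := fun p => iota (p.2 • f (ee p.1) - ee p.1) with hH₂
  have hcψ : Continuous fun p : ℝ × ℝ => p.2 • ee p.1 :=
    continuous_snd.smul (ee_cont.comp continuous_fst)
  have hH₁c : ContinuousOn H₁ Q :=
    iota_cont.comp_continuousOn ((hf.comp hcψ.continuousOn hball).sub hcψ.continuousOn)
  have hH₂c : ContinuousOn H₂ Q := by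
    apply iota_cont.comp_continuousOn
    exact (continuous_snd.continuousOn.smul
      (hf.comp (ee_cont.comp continuous_fst).continuousOn (fun p _ => heball p.1))).sub
      (ee_cont.comp continuous_fst).continuousOn
  have hH₁0 : ∀ p ∈ Q, H₁ p ≠ 0 := by
    intro p hp h
    have h' := iota_eq_zero h
    rw [sub_eq_zero] at h'
    exact hfix _ (hball p hp) h'
  have hH₂0 : ∀ p ∈ Q, H₂ p ≠ 0 := by
    intro p hp h
    have h' := iota_eq_zero h
    rw [sub_eq_zero] at h'
    -- p.2 • f (ee p.1) = ee p.1
    have hn : p.2 * 1 = 1 := by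
      have := congrArg norm h'
      rwa [norm_smul, ee_norm, hfs _ (heball p.1), Real.norm_eq_abs,
        _root_.abs_of_nonneg hp.2.1] at this
    rw [mul_one] at hn
    rw [hn, one_smul] at h'
    exact hfix _ (heball p.1) h'
  obtain ⟨θ₁, hθ₁c, hθ₁⟩ := exists_circle_lift H₁ hH₁c hH₁0
  obtain ⟨θ₂, hθ₂c, hθ₂⟩ := exists_circle_lift H₂ hH₂c hH₂0
  -- restriction continuity helpers
  have hrow : ∀ (θ : ℝ×ℝ→ℝ), ContinuousOn θ Q → ∀ t₀ ∈ Icc (0:ℝ) 1,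
      ContinuousOn (fun s => θ (s, t₀)) (Icc 0 1) := fun θ hθ t₀ ht₀ =>
    hθ.comp (continuous_id.prodMk continuous_const).continuousOn (fun s hs => ⟨hs, ht₀⟩)
  have hcol : ∀ (θ : ℝ×ℝ→ℝ), ContinuousOn θ Q → ∀ s₀ ∈ Icc (0:ℝ) 1,
      ContinuousOn (fun t => θ (s₀, t)) (Icc 0 1) := fun θ hθ s₀ hs₀ =>
    hθ.comp (continuous_const.prodMk continuous_id).continuousOn (fun t ht => ⟨hs₀, ht⟩)
  -- structural identities of the homotopies
  have hH₁s0 : ∀ s : ℝ, H₁ (s, 0) = H₁ (0, 0) := by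
    intro s; simp only [hH₁]; norm_num
  have hH₁1t : ∀ t : ℝ, H₁ (1, t) = H₁ (0, t) := by
    intro t; simp only [hH₁, ee_per]
  have hH₂1u : ∀ u : ℝ, H₂ (1, u) = H₂ (0, u) := by
    intro u; simp only [hH₂, ee_per]
  have hH12 : ∀ s : ℝ, H₂ (s, 1) = H₁ (s, 1) := by
    intro s; simp only [hH₁, hH₂, one_smul]
  have hH₂s0 : ∀ s : ℝ, H₂ (s, 0) = -Complex.exp (↑(2*Real.pi*s) * Complex.I) := by
    intro s
    simp only [hH₂]
    rw [show ((0:ℝ) • f (ee s) - ee s) = -(ee s) by rw [zero_smul, zero_sub], iota_neg, iota_ee]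
  have hH₂s0n : ∀ s : ℝ, ‖H₂ (s, 0)‖ = 1 := by
    intro s
    rw [hH₂s0, norm_neg, Complex.norm_exp_ofReal_mul_I]
  -- (1) θ₁ (1,0) = θ₁ (0,0)
  have e1 : θ₁ (1,0) = θ₁ (0,0) := by
    apply lift_eq (a := fun s => θ₁ (s,0)) (b := fun _ => θ₁ (0,0))
      (hrow θ₁ hθ₁c 0 h0I) continuousOn_const ?_ rfl
    intro s hs
    rw [hθ₁ (s,0) ⟨hs, h0I⟩, hθ₁ (0,0) ⟨h0I, h0I⟩, hH₁s0 s]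
  -- (2) θ₁ (1,1) = θ₁ (0,1)
  have e2 : θ₁ (1,1) = θ₁ (0,1) := by
    apply lift_eq (a := fun t => θ₁ (1,t)) (b := fun t => θ₁ (0,t))
      (hcol θ₁ hθ₁c 1 h1I) (hcol θ₁ hθ₁c 0 h0I) ?_ e1
    intro t ht
    rw [hθ₁ (1,t) ⟨h1I, ht⟩, hθ₁ (0,t) ⟨h0I, ht⟩, hH₁1t t]
  -- (3) bridge between the two lifts along the top edge
  have e3 : θ₂ (1,1) = θ₁ (1,1) + (θ₂ (0,1) - θ₁ (0,1)) := by
    apply lift_eq (a := fun s => θ₂ (s,1)) (b := fun s => θ₁ (s,1) + (θ₂ (0,1) - θ₁ (0,1)))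
      (hrow θ₂ hθ₂c 1 h1I) ((hrow θ₁ hθ₁c 1 h1I).add continuousOn_const) ?_ (by ring)
    intro s hs
    rw [Complex.ofReal_add, add_mul, Complex.exp_add]
    have hc1 : Complex.exp (↑(θ₂ (0,1) - θ₁ (0,1)) * Complex.I) = 1 := by
      rw [show ((↑(θ₂ (0,1) - θ₁ (0,1)) : ℂ) * Complex.I)
        = ↑(θ₂ (0,1)) * Complex.I - ↑(θ₁ (0,1)) * Complex.I by push_cast; ring,
        Complex.exp_sub, hθ₂ (0,1) ⟨h0I, h1I⟩, hθ₁ (0,1) ⟨h0I, h1I⟩, hH12 0,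
        div_self]
      exact div_ne_zero (hH₁0 (0,1) ⟨h0I, h1I⟩) (by
        simpa using norm_ne_zero_iff.mpr (hH₁0 (0,1) ⟨h0I, h1I⟩))
    rw [hc1, mul_one, hθ₂ (s,1) ⟨hs, h1I⟩, hθ₁ (s,1) ⟨hs, h1I⟩, hH12 s]
  -- (4) winding of the bottom edge of `H₂`
  have e4 : θ₂ (1,0) = 2*Real.pi*1 + θ₂ (0,0) := by
    apply lift_eq (a := fun s => θ₂ (s,0)) (b := fun s => 2*Real.pi*s + θ₂ (0,0))
      (hrow θ₂ hθ₂c 0 h0I) (by fun_prop) ?_ (by ring)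
    intro s hs
    have hbase : Complex.exp (↑(θ₂ (0,0)) * Complex.I) = -1 := by
      rw [hθ₂ (0,0) ⟨h0I, h0I⟩, hH₂s0n 0, hH₂s0 0]
      norm_num
    rw [hθ₂ (s,0) ⟨hs, h0I⟩, hH₂s0n s, hH₂s0 s, Complex.ofReal_add, add_mul,
      Complex.exp_add, hbase]
    push_cast
    ring
  -- (5) the two vertical edges of `H₂` differ by `2π`
  have e5 : θ₂ (1,1) = θ₂ (0,1) + 2*Real.pi := by
    apply lift_eq (a := fun u => θ₂ (1,u)) (b := fun u => θ₂ (0,u) + 2*Real.pi)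
      (hcol θ₂ hθ₂c 1 h1I) ((hcol θ₂ hθ₂c 0 h0I).add continuousOn_const) ?_ (by
        show θ₂ (1,0) = θ₂ (0,0) + 2*Real.pi
        rw [e4]; ring)
    intro u hu
    rw [Complex.ofReal_add, add_mul, Complex.exp_add,
      show ((↑(2*Real.pi) : ℂ) * Complex.I) = 2*↑Real.pi*Complex.I by push_cast; ring,
      Complex.exp_two_pi_mul_I, mul_one, hθ₂ (1,u) ⟨h1I, hu⟩, hθ₂ (0,u) ⟨h0I, hu⟩, hH₂1u u]
  -- contradiction
  have := Real.pi_pos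
  rw [e3, e2] at e5
  linarith
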